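/- Let a and b be coprime positive integers. Then the number of orbits of the action of the symmetric group S_a on the set of (a,b)-parking functions equals (a+b−1)!/(a!·b!), i.e., equals (1/(a+b))·binomial(a+b, a). -/

import Mathlib

/-- An `(a,b)`-parking function is `f : Fin a → ℕ` such that for every
`i ∈ {1,…,a}` at least `i` of the values `f j` satisfy `a·f(j) ≤ b·(i−1)`. -/
def IsParkingFunction (a b : ℕ) (f : Fin a → ℕ) : Prop :=
  ∀ i : ℕ, 1 ≤ i → i ≤ a →
    i ≤ (Finset.univ.filter fun j : Fin a => a * f j ≤ b * (i - 1)).card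

open Finset
open Fin.NatCast
open Fin.CommRing

def GoodF (n a : ℕ) (S : Finset (Fin n)) : Prop :=
  S.card = a ∧ ∀ x ∈ S, a * x.val ≤ n * ((S.filter fun y => y.val < x.val).card)


lemma card_filter_lt_fin {n : ℕ} (k : Fin n) :
    (Finset.univ.filter fun j : Fin n => j < k).card = k.val := by
  rw [show (Finset.univ.filter fun j : Fin n => j < k) = Finset.Iio k by ext j; simp]
  simp

lemma card_filter_val_lt {a i : ℕ} (h : i ≤ a) :
    (Finset.univ.filter fun j : Fin a => j.val < i).card = i := by
  rw [← Finset.card_range i]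
  refine Finset.card_bij' (fun j _ => j.val)
    (fun m hm => ⟨m, lt_of_lt_of_le (Finset.mem_range.1 hm) h⟩) ?_ ?_ ?_ ?_
  · intro j hj; simp at hj ⊢; exact hj
  · intro m hm; simp at hm ⊢; exact hm
  · intro j hj; simp
  · intro m hm; simp

lemma smono_gap {a n : ℕ} {s : Fin a → Fin n} (hs : StrictMono s) :
    ∀ j k : Fin a, j ≤ k → (s j).val + (k.val - j.val) ≤ (s k).val := by
  have key : ∀ d : ℕ, ∀ j k : Fin a, k.val = j.val + d → (s j).val + d ≤ (s k).val := by
    intro d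
    induction d with
    | zero =>
      intro j k hjk
      have hjk' : j = k := Fin.ext (by omega)
      rw [hjk']
      omega
    | succ d ih =>
      intro j k hjk
      have hlt : j.val + d < a := by omega
      have h1 := ih j ⟨j.val + d, hlt⟩ rfl
      have h2 : (⟨j.val + d, hlt⟩ : Fin a) < k := by
        rw [Fin.lt_def]; simp; omega
      have h3 := hs h2
      rw [Fin.lt_def] at h3
      omega
  intro j k hjk
  rw [Fin.le_def] at hjk
  exact key (k.val - j.val) j k (by omega)

lemma smono_le {a n : ℕ} {s : Fin a → Fin n} (hs : StrictMono s) (k : Fin a) :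
    k.val ≤ (s k).val := by
  have h := smono_gap hs ⟨0, k.pos⟩ k (by rw [Fin.le_def]; simp)
  simp only [Fin.val_mk, Nat.sub_zero] at h
  omega

lemma card_filter_image_lt {a n : ℕ} {s : Fin a → Fin n} (hs : StrictMono s) (k : Fin a) :
    ((Finset.univ.image s).filter fun y => y.val < (s k).val).card = k.val := by
  have himg : (Finset.univ.image s).filter (fun y => y.val < (s k).val)
      = (Finset.univ.filter fun j : Fin a => j < k).image s := by
    ext y
    simp only [Finset.mem_filter, Finset.mem_image, Finset.mem_univ, true_and]
    constructor
    · rintro ⟨⟨j, rfl⟩, hy⟩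
      exact ⟨j, hs.lt_iff_lt.1 (by rwa [Fin.lt_def]), rfl⟩
    · rintro ⟨j, hj, rfl⟩
      refine ⟨⟨j, rfl⟩, ?_⟩
      have := hs hj
      rwa [Fin.lt_def] at this
  rw [himg, Finset.card_image_of_injective _ hs.injective, card_filter_lt_fin]

lemma mono_pf_iff {a b : ℕ} {f : Fin a → ℕ} (hf : Monotone f) :
    IsParkingFunction a b f ↔ ∀ k : Fin a, a * f k ≤ b * k.val := by
  constructor
  · intro hpf k
    have h1 := hpf (k.val + 1) (by omega) (by omega)
    by_contra hcon
    push_neg at hcon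
    have hsub : (Finset.univ.filter fun j : Fin a => a * f j ≤ b * ((k.val + 1) - 1))
        ⊆ Finset.univ.filter fun j : Fin a => j < k := by
      intro j hj
      simp only [Finset.mem_filter, Finset.mem_univ, true_and] at hj ⊢
      by_contra hjk
      push_neg at hjk
      have h2 : f k ≤ f j := hf hjk
      have h3 : a * f k ≤ a * f j := Nat.mul_le_mul_left a h2
      simp only [Nat.add_sub_cancel] at hj
      omega
    have h4 := Finset.card_le_card hsub
    rw [card_filter_lt_fin] at h4
    omega
  · intro h i hi1 hia
    have hi' : i - 1 < a := by omega
    have hsub : (Finset.univ.filter fun j : Fin a => j.val < i)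
        ⊆ Finset.univ.filter fun j : Fin a => a * f j ≤ b * (i - 1) := by
      intro j hj
      simp only [Finset.mem_filter, Finset.mem_univ, true_and] at hj ⊢
      have hle : j ≤ (⟨i - 1, hi'⟩ : Fin a) := by rw [Fin.le_def]; simp; omega
      have h2 : f j ≤ f ⟨i - 1, hi'⟩ := hf hle
      have h3 := h ⟨i - 1, hi'⟩
      simp only [Fin.val_mk] at h3
      calc a * f j ≤ a * f ⟨i - 1, hi'⟩ := Nat.mul_le_mul_left a h2
        _ ≤ b * (i - 1) := h3
    have h4 := Finset.card_le_card hsub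
    rwa [card_filter_val_lt hia] at h4

lemma pf_comp_perm {a b : ℕ} {f : Fin a → ℕ} (σ : Equiv.Perm (Fin a))
    (hf : IsParkingFunction a b f) : IsParkingFunction a b (f ∘ σ) := by
  intro i h1 h2
  have h3 := hf i h1 h2
  have hcard : (Finset.univ.filter fun j : Fin a => a * f (σ j) ≤ b * (i - 1)).card
      = (Finset.univ.filter fun j : Fin a => a * f j ≤ b * (i - 1)).card := by
    rw [← Finset.card_image_of_injective
      (Finset.univ.filter fun j : Fin a => a * f (σ j) ≤ b * (i - 1)) σ.injective]
    congr 1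
    ext x
    simp only [Finset.mem_image, Finset.mem_filter, Finset.mem_univ, true_and]
    constructor
    · rintro ⟨j, hj, rfl⟩; exact hj
    · intro hx; exact ⟨σ.symm x, by simpa using hx, by simp⟩
  simpa only [Function.comp, hcard] using h3

lemma orbit_eq_comp {a : ℕ} (f : Fin a → ℕ) (τ : Equiv.Perm (Fin a)) :
    {g | ∃ σ : Equiv.Perm (Fin a), g = (f ∘ τ) ∘ σ}
      = {g | ∃ σ : Equiv.Perm (Fin a), g = f ∘ σ} := by
  ext h
  simp only [Set.mem_setOf_eq]
  constructor
  · rintro ⟨σ, rfl⟩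
    exact ⟨τ * σ, by ext x; simp [Equiv.Perm.mul_apply]⟩
  · rintro ⟨σ, rfl⟩
    exact ⟨τ⁻¹ * σ, by ext x; simp [Equiv.Perm.mul_apply]⟩

lemma card_orbits_eq (a b : ℕ) :
    Nat.card {O : Set (Fin a → ℕ) | ∃ f : Fin a → ℕ, IsParkingFunction a b f ∧
        O = {g | ∃ σ : Equiv.Perm (Fin a), g = f ∘ σ}}
    = Nat.card {f : Fin a → ℕ // Monotone f ∧ IsParkingFunction a b f} := by
  symm
  apply Nat.card_eq_of_bijective
    (f := fun p => (⟨{g | ∃ σ : Equiv.Perm (Fin a), g = p.1 ∘ σ}, p.1, p.2.2, rfl⟩ :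
      {O : Set (Fin a → ℕ) | ∃ f : Fin a → ℕ, IsParkingFunction a b f ∧
        O = {g | ∃ σ : Equiv.Perm (Fin a), g = f ∘ σ}}))
  constructor
  · rintro ⟨f1, hm1, hp1⟩ ⟨f2, hm2, hp2⟩ heq
    simp only [Subtype.mk.injEq] at heq
    have hf1 : f1 ∈ {g | ∃ σ : Equiv.Perm (Fin a), g = f1 ∘ σ} :=
      ⟨1, by ext x; simp⟩
    rw [heq] at hf1
    obtain ⟨σ, hσ⟩ := hf1
    have hmono : Monotone (f2 ∘ σ) := hσ ▸ hm1
    have e1 : f2 ∘ ⇑σ = f2 ∘ ⇑(Tuple.sort f2) :=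
      Tuple.comp_sort_eq_comp_iff_monotone.mpr hmono
    have e2 : f2 ∘ ⇑(1 : Equiv.Perm (Fin a)) = f2 ∘ ⇑(Tuple.sort f2) :=
      Tuple.comp_sort_eq_comp_iff_monotone.mpr (by simpa using hm2)
    have : f1 = f2 := by
      rw [hσ, e1, ← e2]; ext x; simp
    exact Subtype.ext this
  · rintro ⟨O, f, hpf, rfl⟩
    refine ⟨⟨f ∘ ⇑(Tuple.sort f), Tuple.monotone_sort f, pf_comp_perm _ hpf⟩, ?_⟩
    exact Subtype.ext (orbit_eq_comp f (Tuple.sort f))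

lemma card_monopf_eq_good (a b : ℕ) (ha : 0 < a) :
    Nat.card {f : Fin a → ℕ // Monotone f ∧ IsParkingFunction a b f}
      = Nat.card {S : Finset (Fin (a + b)) // GoodF (a + b) a S} := by
  set n := a + b with hn
  have hbound : ∀ (f : Fin a → ℕ), (∀ k : Fin a, a * f k ≤ b * k.val) →
      ∀ k : Fin a, f k + k.val < n := by
    intro f hpk k
    have h1 : a * (f k + k.val) ≤ (a + b) * k.val := by
      rw [Nat.mul_add, Nat.add_mul]
      have := hpk k
      linarith
    have h2 : (a + b) * k.val < (a + b) * a :=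
      mul_lt_mul_of_pos_left k.isLt (by omega)
    have h3 : a * (f k + k.val) < a * (a + b) := by
      rw [Nat.mul_comm a (a + b)]
      exact lt_of_le_of_lt h1 h2
    exact Nat.lt_of_mul_lt_mul_left h3
  set tup : (Fin a → ℕ) → Fin a → Fin n :=
    (fun f k => ⟨(f k + k.val) % n, Nat.mod_lt _ (by omega)⟩) with htup
  have htupval : ∀ (f : Fin a → ℕ), (∀ k : Fin a, a * f k ≤ b * k.val) →
      ∀ k : Fin a, (tup f k).val = f k + k.val := by
    intro f hpk k
    exact Nat.mod_eq_of_lt (hbound f hpk k)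
  have htupmono : ∀ (f : Fin a → ℕ), Monotone f → (∀ k : Fin a, a * f k ≤ b * k.val) →
      StrictMono (tup f) := by
    intro f hm hpk j k hjk
    rw [Fin.lt_def, htupval f hpk, htupval f hpk]
    have : f j ≤ f k := hm (le_of_lt hjk)
    rw [Fin.lt_def] at hjk
    omega
  apply Nat.card_eq_of_bijective
    (f := fun p => (⟨Finset.univ.image (tup p.1), by
      obtain ⟨f, hm, hpf⟩ := p
      have hpk := (mono_pf_iff hm).1 hpf
      constructor
      · rw [Finset.card_image_of_injective _ (htupmono f hm hpk).injective]
        simp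
      · intro x hx
        simp only [Finset.mem_image, Finset.mem_univ, true_and] at hx
        obtain ⟨k, rfl⟩ := hx
        rw [card_filter_image_lt (htupmono f hm hpk) k, htupval f hpk]
        have := hpk k
        rw [Nat.mul_add, Nat.add_mul]
        linarith⟩ : {S : Finset (Fin n) // GoodF n a S}))
  constructor
  · rintro ⟨f1, hm1, hp1⟩ ⟨f2, hm2, hp2⟩ heq
    simp only [Subtype.mk.injEq] at heq
    have hpk1 := (mono_pf_iff hm1).1 hp1
    have hpk2 := (mono_pf_iff hm2).1 hp2
    have hc1 : (Finset.univ.image (tup f1)).card = a := by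
      rw [Finset.card_image_of_injective _ (htupmono f1 hm1 hpk1).injective]; simp
    have e1 : tup f1 = ⇑((Finset.univ.image (tup f1)).orderEmbOfFin hc1) :=
      Finset.orderEmbOfFin_unique hc1
        (fun k => Finset.mem_image_of_mem _ (Finset.mem_univ k)) (htupmono f1 hm1 hpk1)
    have e2 : tup f2 = ⇑((Finset.univ.image (tup f1)).orderEmbOfFin hc1) :=
      Finset.orderEmbOfFin_unique hc1
        (fun k => heq ▸ Finset.mem_image_of_mem _ (Finset.mem_univ k)) (htupmono f2 hm2 hpk2)
    have etup : tup f1 = tup f2 := by rw [e1, e2]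
    refine Subtype.ext (funext fun k => ?_)
    have hval := congrArg (fun g => (g k : Fin n).val) etup
    simp only [htup, Fin.val_mk] at hval
    have hb1 := Nat.mod_eq_of_lt (hbound f1 hpk1 k)
    have hb2 := Nat.mod_eq_of_lt (hbound f2 hpk2 k)
    show f1 k = f2 k
    omega
  · rintro ⟨S, hcard, hgood⟩
    set e := S.orderEmbOfFin hcard with he
    have hse : StrictMono ⇑e := e.strictMono
    have hmem : ∀ k, e k ∈ S := fun k => Finset.orderEmbOfFin_mem S hcard k
    have himg : Finset.univ.image ⇑e = S := by
      rw [← Finset.coe_inj, Finset.coe_image, Finset.coe_univ, Set.image_univ,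
        Finset.range_orderEmbOfFin]
    set f : Fin a → ℕ := fun k => (e k).val - k.val with hfdef
    have hkle : ∀ k : Fin a, k.val ≤ (e k).val := smono_le hse
    have hfmono : Monotone f := by
      intro j k hjk
      have := smono_gap hse j k hjk
      have h1 := hkle j
      rw [Fin.le_def] at hjk
      simp only [hfdef]
      omega
    have hfpk : ∀ k : Fin a, a * f k ≤ b * k.val := by
      intro k
      have h1 := hgood (e k) (hmem k)
      have h2 : ((S.filter fun y => y.val < (e k).val).card) = k.val := by
        rw [← himg]; exact card_filter_image_lt hse k
      rw [h2] at h1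
      have h3 : (e k).val = f k + k.val := by
        simp only [hfdef]; have := hkle k; omega
      rw [h3, Nat.mul_add, Nat.add_mul] at h1
      linarith
    have hfpf : IsParkingFunction a b f := (mono_pf_iff hfmono).2 hfpk
    refine ⟨⟨f, hfmono, hfpf⟩, Subtype.ext ?_⟩
    simp only
    rw [← himg]
    congr 1
    funext k
    apply Fin.ext
    rw [htupval f hfpk k]
    simp only [hfdef]
    have := hkle k
    omega

def cntP (n : ℕ) [NeZero n] (S : Finset (Fin n)) (m : ℕ) : ℕ :=
  ((Finset.range m).filter fun j : ℕ => (((j : ℕ) : Fin n) ∈ S)).card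

def Hf (n a : ℕ) [NeZero n] (S : Finset (Fin n)) (m : ℕ) : ℤ :=
  (n : ℤ) * cntP n S m - (a : ℤ) * m

section cyc
variable {n a : ℕ} [NeZero n] {S : Finset (Fin n)}

lemma cntP_succ (m : ℕ) :
    cntP n S (m + 1) = cntP n S m + if ((m : Fin n) ∈ S) then 1 else 0 := by
  unfold cntP
  rw [Finset.range_add_one, Finset.filter_insert]
  split
  · rw [Finset.card_insert_of_notMem (by simp)]
  · simp

lemma Hf_succ (m : ℕ) :
    Hf n a S (m + 1) = Hf n a S m + (if ((m : Fin n) ∈ S) then (n : ℤ) else 0) - a := by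
  unfold Hf
  rw [cntP_succ]
  split <;> push_cast <;> ring

lemma cntP_n (hS : S.card = a) : cntP n S n = a := by
  unfold cntP
  rw [← hS]
  refine Finset.card_bij' (fun (j : ℕ) _ => ((j : ℕ) : Fin n)) (fun (x : Fin n) _ => x.val) ?_ ?_ ?_ ?_
  · intro j hj
    simp only [Finset.mem_filter] at hj
    exact hj.2
  · intro x hx
    simp only [Finset.mem_filter, Finset.mem_range]
    exact ⟨x.isLt, by rw [Fin.cast_val_eq_self]; exact hx⟩
  · intro j hj
    simp only [Finset.mem_filter, Finset.mem_range] at hj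
    simp only [Fin.val_natCast]
    exact Nat.mod_eq_of_lt hj.1
  · intro x hx
    simp only [Fin.cast_val_eq_self]

lemma Hf_add_n (hS : S.card = a) : ∀ m, Hf n a S (m + n) = Hf n a S m := by
  intro m
  induction m with
  | zero =>
    simp only [Nat.zero_add]
    unfold Hf
    rw [cntP_n hS]
    simp [cntP]
    ring
  | succ m ih =>
    have e1 : m + 1 + n = (m + n) + 1 := by omega
    have e2 : ((m + n : ℕ) : Fin n) = ((m : ℕ) : Fin n) := by
      push_cast
      simp
    rw [e1, Hf_succ, Hf_succ, ih, e2]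

lemma Hf_inj (hcop : Nat.Coprime a n) {m1 m2 : ℕ} (h1 : m1 < n) (h2 : m2 < n)
    (he : Hf n a S m1 = Hf n a S m2) : m1 = m2 := by
  unfold Hf at he
  have hdvd : (n : ℤ) ∣ (a : ℤ) * ((m1 : ℤ) - m2) := by
    refine ⟨(cntP n S m1 : ℤ) - cntP n S m2, ?_⟩
    ring_nf
    linarith [he]
  have hco : IsCoprime (n : ℤ) (a : ℤ) := by
    rw [Int.isCoprime_iff_gcd_eq_one]
    simpa [Nat.coprime_comm] using hcop
  have hdvd2 : (n : ℤ) ∣ ((m1 : ℤ) - m2) := hco.dvd_of_dvd_mul_left hdvd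
  by_contra hne
  have hne' : (m1 : ℤ) - m2 ≠ 0 := by
    intro h; apply hne; omega
  have h3 : (n : ℤ) ≤ |(m1 : ℤ) - m2| :=
    Int.le_of_dvd (abs_pos.2 hne') ((dvd_abs _ _).2 hdvd2)
  have h4 : |(m1 : ℤ) - m2| < n := by
    rw [abs_lt]
    constructor <;> omega
  omega

lemma cntP_add (u m : ℕ) :
    cntP n S (u + m) = cntP n S u
      + ((Finset.Ico u (u + m)).filter fun j : ℕ => (((j : ℕ) : Fin n) ∈ S)).card := by
  unfold cntP
  rw [Finset.range_eq_Ico, ← Finset.Ico_union_Ico_eq_Ico (Nat.zero_le u) (Nat.le_add_right u m),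
    Finset.filter_union, Finset.card_union_of_disjoint
      (Finset.disjoint_filter_filter (Finset.Ico_disjoint_Ico_consecutive 0 u (u + m))),
    Finset.range_eq_Ico]

lemma shift_filter_card (t : Fin n) (m : ℕ) (hm : m ≤ n) :
    ((S.image (fun x => x + t)).filter fun y => y.val < m).card
      = ((Finset.Ico ((-t : Fin n)).val (((-t : Fin n)).val + m)).filter
          fun j : ℕ => (((j : ℕ) : Fin n) ∈ S)).card := by
  set u := ((-t : Fin n)).val with hu
  have helper1 : ∀ r : ℕ, r < n → ((((u + r : ℕ) : Fin n)) + t).val = r := by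
    intro r hr
    have e1 : ((u + r : ℕ) : Fin n) = -t + ((r : ℕ) : Fin n) := by
      push_cast
      rw [hu, Fin.cast_val_eq_self]
    rw [e1]
    have e2 : -t + ((r : ℕ) : Fin n) + t = ((r : ℕ) : Fin n) := by ring
    rw [e2, Fin.val_natCast]
    exact Nat.mod_eq_of_lt hr
  refine Finset.card_bij' (fun (y : Fin n) _ => u + y.val) (fun (j : ℕ) _ => ((j : ℕ) : Fin n) + t) ?_ ?_ ?_ ?_
  · intro y hy
    simp only [Finset.mem_filter, Finset.mem_image] at hy
    obtain ⟨⟨x, hxS, rfl⟩, hlt⟩ := hy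
    simp only [Finset.mem_filter, Finset.mem_Ico]
    refine ⟨⟨Nat.le_add_right _ _, by omega⟩, ?_⟩
    have e1 : ((u + (x + t).val : ℕ) : Fin n) = -t + (x + t) := by
      push_cast
      rw [hu, Fin.cast_val_eq_self]
    have e2 : -t + (x + t) = x := by ring
    show ((u + (x + t).val : ℕ) : Fin n) ∈ S
    rw [e1, e2]
    exact hxS
  · intro j hj
    simp only [Finset.mem_filter, Finset.mem_Ico] at hj
    obtain ⟨⟨hj1, hj2⟩, hjS⟩ := hj
    simp only [Finset.mem_filter, Finset.mem_image]
    constructor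
    · exact ⟨((j : ℕ) : Fin n), hjS, rfl⟩
    · have e3 : j = u + (j - u) := by omega
      rw [e3, helper1 (j - u) (by omega)]
      omega
  · intro y hy
    simp only [Finset.mem_filter, Finset.mem_image] at hy
    have e1 : ((u + y.val : ℕ) : Fin n) = -t + y := by
      push_cast
      rw [hu, Fin.cast_val_eq_self]
    show ((u + y.val : ℕ) : Fin n) + t = y
    rw [e1]
    ring
  · intro j hj
    simp only [Finset.mem_filter, Finset.mem_Ico] at hj
    obtain ⟨⟨hj1, hj2⟩, hjS⟩ := hj
    show u + ((((j : ℕ) : Fin n)) + t).val = j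
    have e3 : j = u + (j - u) := by omega
    rw [e3, helper1 (j - u) (by omega)]

lemma Hf_shift (t : Fin n) (m : ℕ) (hm : m ≤ n) :
    (n : ℤ) * ((S.image (fun x => x + t)).filter fun y => y.val < m).card - (a : ℤ) * m
      = Hf n a S (((-t : Fin n)).val + m) - Hf n a S (((-t : Fin n)).val) := by
  rw [shift_filter_card t m hm]
  unfold Hf
  rw [cntP_add]
  push_cast
  ring

lemma cntP_eq_filter (m : ℕ) (hm : m ≤ n) :
    cntP n S m = (S.filter fun y => y.val < m).card := by
  unfold cntP
  refine Finset.card_bij' (fun (j : ℕ) _ => ((j : ℕ) : Fin n)) (fun (y : Fin n) _ => y.val) ?_ ?_ ?_ ?_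
  · intro j hj
    simp only [Finset.mem_filter, Finset.mem_range] at hj ⊢
    refine ⟨hj.2, ?_⟩
    rw [Fin.val_natCast, Nat.mod_eq_of_lt (by omega)]
    exact hj.1
  · intro y hy
    simp only [Finset.mem_filter, Finset.mem_range] at hy ⊢
    exact ⟨hy.2, by rw [Fin.cast_val_eq_self]; exact hy.1⟩
  · intro j hj
    simp only [Finset.mem_filter, Finset.mem_range] at hj
    simp only [Fin.val_natCast]
    exact Nat.mod_eq_of_lt (by omega)
  · intro y hy
    simp only [Fin.cast_val_eq_self]
end cyc

section cyc2
variable {n a : ℕ} [NeZero n] {S : Finset (Fin n)}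

lemma goodF_iff_H (hn : 0 < n) (hS : S.card = a) :
    GoodF n a S ↔ ∀ m, m < n → 0 ≤ Hf n a S m := by
  constructor
  · rintro ⟨-, h⟩ m hm
    unfold Hf
    rcases (S.filter fun y => m ≤ y.val).eq_empty_or_nonempty with hT | hT
    · have hall := Finset.filter_eq_empty_iff.1 hT
      have hfe : S.filter (fun y => y.val < m) = S := by
        ext y
        simp only [Finset.mem_filter, and_iff_left_iff_imp]
        intro hy
        have := hall hy
        omega
      rw [cntP_eq_filter m (le_of_lt hm), hfe, hS]
      have h2 : (a : ℤ) * m ≤ (n : ℤ) * a := by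
        have : a * m ≤ n * a := by
          calc a * m ≤ a * n := Nat.mul_le_mul_left a hm.le
            _ = n * a := Nat.mul_comm a n
        exact_mod_cast this
      linarith
    · set x := (S.filter fun y => m ≤ y.val).min' hT with hx
      have hxmem := Finset.min'_mem _ hT
      rw [← hx] at hxmem
      simp only [Finset.mem_filter] at hxmem
      obtain ⟨hxS, hmx⟩ := hxmem
      have hfeq : S.filter (fun y => y.val < x.val) = S.filter (fun y => y.val < m) := by
        ext y
        simp only [Finset.mem_filter, and_congr_right_iff]
        intro hyS
        constructor
        · intro hyx
          by_contra hge
          push_neg at hge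
          have hmin := (S.filter fun y => m ≤ y.val).min'_le y (Finset.mem_filter.2 ⟨hyS, hge⟩)
          rw [← hx, Fin.le_def] at hmin
          omega
        · intro hym; omega
      have h1 := h x hxS
      rw [hfeq] at h1
      rw [cntP_eq_filter m (le_of_lt hm)]
      have h3 : a * m ≤ n * (S.filter (fun y => y.val < m)).card :=
        le_trans (Nat.mul_le_mul_left a hmx) h1
      have h4 : (a : ℤ) * m ≤ (n : ℤ) * (S.filter (fun y => y.val < m)).card := by
        exact_mod_cast h3
      linarith
  · intro h
    refine ⟨hS, ?_⟩
    intro x hxS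
    have h1 := h x.val x.isLt
    unfold Hf at h1
    rw [cntP_eq_filter x.val (le_of_lt x.isLt)] at h1
    have h2 : (a : ℤ) * x.val ≤ (n : ℤ) * (S.filter fun y => y.val < x.val).card := by
      linarith
    exact_mod_cast h2

lemma goodF_shift_iff (hn : 0 < n) (hS : S.card = a) (t : Fin n) :
    GoodF n a (S.image fun x => x + t) ↔
      ∀ m, m < n → Hf n a S (((-t : Fin n)).val) ≤ Hf n a S (((-t : Fin n)).val + m) := by
  have hcard : (S.image fun x => x + t).card = a := by
    rw [Finset.card_image_of_injective _ (add_left_injective t), hS]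
  rw [goodF_iff_H hn hcard]
  refine forall_congr' fun m => ?_
  refine imp_congr_right fun hm => ?_
  have e : Hf n a (S.image fun x => x + t) m
      = Hf n a S (((-t : Fin n)).val + m) - Hf n a S (((-t : Fin n)).val) := by
    show (n : ℤ) * cntP n (S.image fun x => x + t) m - (a : ℤ) * m = _
    rw [cntP_eq_filter (S := S.image fun x => x + t) m hm.le]
    exact Hf_shift t m hm.le
  rw [e]
  constructor <;> intro h <;> linarith

lemma exists_unique_good_shift (hn : 0 < n) (hcop : Nat.Coprime a n) (hS : S.card = a) :
    ∃! t : Fin n, GoodF n a (S.image fun x => x + t) := by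
  obtain ⟨u₀, hu₀mem, hu₀min⟩ :=
    Finset.exists_min_image (Finset.range n) (Hf n a S) ⟨0, Finset.mem_range.2 hn⟩
  rw [Finset.mem_range] at hu₀mem
  have hmin : ∀ v, v < n → Hf n a S u₀ ≤ Hf n a S v := fun v hv =>
    hu₀min v (Finset.mem_range.2 hv)
  refine ⟨-((u₀ : ℕ) : Fin n), ?_, ?_⟩
  · show GoodF n a (S.image fun x => x + (-((u₀ : ℕ) : Fin n)))
    rw [goodF_shift_iff hn hS]
    have huval : ((- -((u₀ : ℕ) : Fin n) : Fin n)).val = u₀ := by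
      rw [neg_neg, Fin.val_natCast]
      exact Nat.mod_eq_of_lt hu₀mem
    rw [huval]
    intro m hm
    by_cases hcase : u₀ + m < n
    · exact hmin _ hcase
    · have e : u₀ + m = (u₀ + m - n) + n := by omega
      rw [e, Hf_add_n hS]
      exact hmin _ (by omega)
  · intro t ht
    rw [goodF_shift_iff hn hS] at ht
    set u := ((-t : Fin n)).val with hu
    have hun : u < n := (-t).isLt
    have htmin : ∀ v, v < n → Hf n a S u ≤ Hf n a S v := by
      intro v hv
      rcases le_or_gt u v with hle | hlt
      · have h1 := ht (v - u) (by omega)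
        rwa [Nat.add_sub_cancel' hle] at h1
      · have h1 := ht (v + n - u) (by omega)
        have e : u + (v + n - u) = v + n := by omega
        rw [e, Hf_add_n hS] at h1
        exact h1
    have heq : Hf n a S u = Hf n a S u₀ := le_antisymm (htmin u₀ hu₀mem) (hmin u hun)
    have huu : u = u₀ := Hf_inj hcop hun hu₀mem heq
    have hnt : -t = ((u₀ : ℕ) : Fin n) := by
      apply Fin.ext
      rw [Fin.val_natCast, Nat.mod_eq_of_lt hu₀mem]
      omega
    rw [← neg_neg t, hnt]

lemma good_count (hn : 0 < n) (hcop : Nat.Coprime a n) :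
    Nat.card {S : Finset (Fin n) // GoodF n a S} * n = n.choose a := by
  have key : ∀ T : Finset (Fin n), T.card = a →
      ∃! t : Fin n, GoodF n a (T.image fun x => x + t) :=
    fun T hT => exists_unique_good_shift hn hcop hT
  have himgcard : ∀ (T : Finset (Fin n)) (t : Fin n), (T.image fun x => x + t).card = T.card :=
    fun T t => Finset.card_image_of_injective _ (add_left_injective t)
  have himgimg : ∀ (T : Finset (Fin n)) (t s : Fin n),
      ((T.image fun x => x + t).image fun x => x + s) = T.image fun x => x + (t + s) := by
    intro T t s
    rw [Finset.image_image]
    congr 1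
    funext x
    simp [add_assoc]
  have himg0 : ∀ T : Finset (Fin n), (T.image fun x => x + (0 : Fin n)) = T := by
    intro T; simp
  have hbij : Function.Bijective (fun p : {S : Finset (Fin n) // GoodF n a S} × Fin n =>
      (⟨p.1.1.image fun x => x + p.2, by rw [himgcard, p.1.2.1]⟩ :
        {T : Finset (Fin n) // T.card = a})) := by
    constructor
    · rintro ⟨⟨S1, h1⟩, t1⟩ ⟨⟨S2, h2⟩, t2⟩ heq
      simp only [Subtype.mk.injEq] at heq
      have hS2 : S2 = S1.image fun x => x + (t1 + -t2) := by
        have h3 := congrArg (fun T : Finset (Fin n) => T.image fun x => x + (-t2)) heq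
        rw [himgimg, himgimg, add_neg_cancel, himg0] at h3
        exact h3.symm
      have ha1 : GoodF n a (S1.image fun x => x + (t1 + -t2)) := hS2 ▸ h2
      have ha2 : GoodF n a (S1.image fun x => x + 0) := by rw [himg0]; exact h1
      obtain ⟨t', -, huniq⟩ := key S1 h1.1
      have ht0 : t1 + -t2 = (0 : Fin n) := by
        rw [huniq _ ha1, huniq _ ha2]
      have ht12 : t1 = t2 := by
        have := add_neg_eq_zero.1 ht0
        exact this
      subst ht12
      have hSS : S1 = S2 := by
        rw [hS2, add_neg_cancel, himg0]
      subst hSS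
      rfl
    · rintro ⟨T, hT⟩
      obtain ⟨t, hGood, -⟩ := key T hT
      refine ⟨⟨⟨T.image fun x => x + t, hGood⟩, -t⟩, ?_⟩
      apply Subtype.ext
      simp only
      rw [himgimg, add_neg_cancel, himg0]
  have hcards := Nat.card_eq_of_bijective _ hbij
  have hfin : Nat.card (Fin n) = n := by simp
  have hT : Nat.card {T : Finset (Fin n) // T.card = a} = n.choose a := by
    rw [Nat.card_eq_fintype_card, Fintype.card_subtype]
    rw [show (Finset.univ.filter fun T : Finset (Fin n) => T.card = a)
        = Finset.powersetCard a Finset.univ from by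
      ext T
      simp [Finset.mem_powersetCard_univ]]
    rw [Finset.card_powersetCard, Finset.card_univ, Fintype.card_fin]
  rw [Nat.card_prod, hfin, hT] at hcards
  exact hcards

end cyc2


theorem stmt6 (a b : ℕ) (ha : 0 < a) (hb : 0 < b) (hab : Nat.Coprime a b) :
    {O : Set (Fin a → ℕ) | ∃ f : Fin a → ℕ, IsParkingFunction a b f ∧
        O = {g | ∃ σ : Equiv.Perm (Fin a), g = f ∘ σ}}.ncard *
      (a.factorial * b.factorial) = (a + b - 1).factorial := by
  haveI : NeZero (a + b) := ⟨by omega⟩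
  have hcop : Nat.Coprime a (a + b) := by
    have h := (Nat.coprime_add_self_right (m := a) (n := b)).2 hab
    rwa [Nat.add_comm b a] at h
  have h1 : {O : Set (Fin a → ℕ) | ∃ f : Fin a → ℕ, IsParkingFunction a b f ∧
        O = {g | ∃ σ : Equiv.Perm (Fin a), g = f ∘ σ}}.ncard
      = Nat.card {S : Finset (Fin (a + b)) // GoodF (a + b) a S} := by
    rw [← Nat.card_coe_set_eq, card_orbits_eq, card_monopf_eq_good a b ha]
  have h3 : Nat.card {S : Finset (Fin (a + b)) // GoodF (a + b) a S} * (a + b)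
      = (a + b).choose a := good_count (by omega) hcop
  have hfact : (a + b).choose a * (a.factorial * b.factorial) = (a + b).factorial := by
    have h4 := Nat.choose_mul_factorial_mul_factorial (show a ≤ a + b by omega)
    rw [show a + b - a = b by omega] at h4
    rw [← h4]
    ring
  have hnfact : (a + b).factorial = (a + b) * (a + b - 1).factorial :=
    (Nat.mul_factorial_pred (by omega)).symm
  apply Nat.eq_of_mul_eq_mul_left (show 0 < a + b by omega)
  calc (a + b) * ({O : Set (Fin a → ℕ) | ∃ f : Fin a → ℕ, IsParkingFunction a b f ∧
        O = {g | ∃ σ : Equiv.Perm (Fin a), g = f ∘ σ}}.ncard * (a.factorial * b.factorial))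
      = ({O : Set (Fin a → ℕ) | ∃ f : Fin a → ℕ, IsParkingFunction a b f ∧
        O = {g | ∃ σ : Equiv.Perm (Fin a), g = f ∘ σ}}.ncard * (a + b))
          * (a.factorial * b.factorial) := by ring
    _ = (Nat.card {S : Finset (Fin (a + b)) // GoodF (a + b) a S} * (a + b))
          * (a.factorial * b.factorial) := by rw [h1]
    _ = (a + b).choose a * (a.factorial * b.factorial) := by rw [h3]
    _ = (a + b).factorial := hfact
    _ = (a + b) * (a + b - 1).factorial := hnfact
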